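/- arXiv:math/0606726 — 3 statements merged into one kernel-verified Lean document; each statement's English description precedes it below -/
import Mathlib

section
/- If two words w_1, w_2 on a totally ordered alphabet are sylvester congruent, then their standardizations std(w_1) and std(w_2) are sylvester congruent permutations. -/
open scoped Classical

/-- `d` is a diagonal of the convex `(n+2)`-gon with vertices `0,…,n+1`
(in clockwise increasing order): it joins two nonadjacent vertices. -/
def IsDiagonal (n : ℕ) (d : ℕ × ℕ) : Prop :=
  d.1 < d.2 ∧ d.2 ≤ n + 1 ∧ d.2 ≠ d.1 + 1 ∧ ¬(d.1 = 0 ∧ d.2 = n + 1)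

/-- Two diagonals of a convex polygon cross. -/
def Crosses (d e : ℕ × ℕ) : Prop :=
  (d.1 < e.1 ∧ e.1 < d.2 ∧ d.2 < e.2) ∨ (e.1 < d.1 ∧ d.1 < e.2 ∧ e.2 < d.2)

/-- A triangulation of the convex `(n+2)`-gon: `n-1` pairwise noncrossing diagonals. -/
def IsTriangulation (n : ℕ) (D : Finset (ℕ × ℕ)) : Prop :=
  (∀ d ∈ D, IsDiagonal n d) ∧ (∀ d ∈ D, ∀ e ∈ D, ¬ Crosses d e) ∧ D.card = n - 1

/-- `{a,b}` (with `a<b`) is an edge of the triangulation `D`: a polygon side or a diagonal. -/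
def IsEdge (n : ℕ) (D : Finset (ℕ × ℕ)) (a b : ℕ) : Prop :=
  a < b ∧ b ≤ n + 1 ∧ (b = a + 1 ∨ (a = 0 ∧ b = n + 1) ∨ (a, b) ∈ D)

/-- `{a,b,c}` (with `a<b<c`) is a (triangular) face of the triangulation `D`. -/
def IsFace (n : ℕ) (D : Finset (ℕ × ℕ)) (a b c : ℕ) : Prop :=
  a < b ∧ b < c ∧ IsEdge n D a b ∧ IsEdge n D b c ∧ IsEdge n D a c

/-- An ear of a triangulation: a vertex incident to no diagonal. -/
def IsEar (n : ℕ) (D : Finset (ℕ × ℕ)) (v : ℕ) : Prop :=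
  v ≤ n + 1 ∧ ∀ d ∈ D, d.1 ≠ v ∧ d.2 ≠ v

/-- Degree of a vertex: number of edges (polygon sides and diagonals) incident to it. -/
noncomputable def degreeOf (n : ℕ) (D : Finset (ℕ × ℕ)) (v : ℕ) : ℕ :=
  ((Finset.range (n + 2)).filter (fun w => w ≠ v ∧ IsEdge n D (min v w) (max v w))).card

/-- The set of faces of a triangulation, as increasing triples. -/
noncomputable def facesSet (n : ℕ) (D : Finset (ℕ × ℕ)) : Finset (ℕ × ℕ × ℕ) :=
  (Finset.range (n + 2) ×ˢ Finset.range (n + 2) ×ˢ Finset.range (n + 2)).filter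
    (fun t => IsFace n D t.1 t.2.1 t.2.2)

/-- Predecessor of `v` in the vertex set `Y`. -/
def predIn (Y : Finset ℕ) (v : ℕ) : ℕ := WithBot.unbotD 0 (Y.filter (· < v)).max
/-- Successor of `v` in the vertex set `Y`. -/
def succIn (Y : Finset ℕ) (v : ℕ) : ℕ := WithTop.untopD 0 (Y.filter (v < ·)).min

/-- The iterative neighbor-joining construction: for each successive letter,
join its two current neighbors by a diagonal and delete the letter's vertex. -/
def phiAux : List ℕ → Finset ℕ → Finset (ℕ × ℕ)
  | [], _ => ∅
  | [_], _ => ∅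
  | v :: rest, Y => insert (predIn Y v, succIn Y v) (phiAux rest (Y.erase v))

/-- The map `φ` from permutations (standard words, letters `1,…,n`) to
triangulations of the `(n+2)`-gon with vertices `0,…,n+1`. -/
def phiT (n : ℕ) (l : List ℕ) : Finset (ℕ × ℕ) := phiAux l (Finset.range (n + 2))

/-- `t` is the third vertex of a face of `D` containing the polygon side `{i, i+1}`. -/
def FaceOnEdge (n : ℕ) (D : Finset (ℕ × ℕ)) (i t : ℕ) : Prop :=
  (t < i ∧ IsFace n D t i (i + 1)) ∨ (i + 1 < t ∧ IsFace n D i (i + 1) t)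

/-- `D` and `D'` differ by one diagonal flip, in the quadrilateral `a<b<c<d`. -/
def FlipAdj (n : ℕ) (D D' : Finset (ℕ × ℕ)) : Prop :=
  ∃ a b c d : ℕ, a < b ∧ b < c ∧ c < d ∧
    ((IsFace n D a b d ∧ IsFace n D b c d ∧ D' = insert (a, c) (D.erase (b, d))) ∨
     (IsFace n D a b c ∧ IsFace n D a c d ∧ D' = insert (b, d) (D.erase (a, c))))

/-- Sylvester adjacency: `u x z u' y u'' ~ u z x u' y u''` with `x ≤ y < z`. -/
def SylvAdj (w1 w2 : List ℕ) : Prop :=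
  ∃ (u u' u'' : List ℕ) (x y z : ℕ), x ≤ y ∧ y < z ∧
    w1 = u ++ x :: z :: (u' ++ y :: u'') ∧ w2 = u ++ z :: x :: (u' ++ y :: u'')

/-- Sylvester congruence: the equivalence relation generated by sylvester adjacency. -/
def SylvCong : List ℕ → List ℕ → Prop := Relation.EqvGen SylvAdj

/-- Standardization of a word: replace the occurrences of the smallest letter,
left to right, by `1, 2, …`, then continue with the next letter, etc. -/
def stdW (w : List ℕ) : List ℕ :=
  (List.range w.length).map (fun i =>
    (((List.range w.length).filter (fun j =>
      w.getD j 0 < w.getD i 0 ∨ (w.getD j 0 = w.getD i 0 ∧ j < i))).length) + 1)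

/-- Partial sums of an evaluation `μ`. -/
def Msum (μ : ℕ → ℕ) (s : ℕ) : ℕ := ∑ t ∈ Finset.range s, μ t

/-- The color (block index) of the vertex `i` for the increasing coloring `ε_μ`. -/
noncomputable def colOf (μ : ℕ → ℕ) (p i : ℕ) : ℕ :=
  ((Finset.range p).filter (fun s => Msum μ (s + 1) < i)).card

/-- `D`, colored by the increasing coloring `ε_μ`, is a simple colored triangulation. -/
def SimpleFor (n p : ℕ) (μ : ℕ → ℕ) (D : Finset (ℕ × ℕ)) : Prop :=
  IsTriangulation n D ∧
  (∀ d ∈ D, 1 ≤ d.1 → d.2 ≤ n → colOf μ p d.1 ≠ colOf μ p d.2) ∧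
  (∀ i t, 1 ≤ i → i + 1 ≤ n → colOf μ p i = colOf μ p (i + 1) →
    FaceOnEdge n D i t → t < i)

/-- Switched flip: a diagonal flip (preserving vertex colors) whose two adjacent
faces (with middle vertices `b` and `c`) have different colors. -/
def SwFlipAdj (n p : ℕ) (μ : ℕ → ℕ) (D D' : Finset (ℕ × ℕ)) : Prop :=
  ∃ a b c d : ℕ, a < b ∧ b < c ∧ c < d ∧ colOf μ p b ≠ colOf μ p c ∧
    ((IsFace n D a b d ∧ IsFace n D b c d ∧ D' = insert (a, c) (D.erase (b, d))) ∨
     (IsFace n D a b c ∧ IsFace n D a c d ∧ D' = insert (b, d) (D.erase (a, c))))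
noncomputable def fstd (w : List ℕ) (i : ℕ) : ℕ :=
  ((Finset.range w.length).filter (fun j =>
      w.getD j 0 < w.getD i 0 ∨ (w.getD j 0 = w.getD i 0 ∧ j < i))).card + 1

lemma stdW_eq_map (w : List ℕ) : stdW w = (List.range w.length).map (fstd w) := rfl

def sw (k j : ℕ) : ℕ := if j = k then k+1 else if j = k+1 then k else j

lemma sw_sw (k j : ℕ) : sw k (sw k j) = j := by unfold sw; split_ifs <;> omega

lemma sw_lt {n : ℕ} (k j : ℕ) (h : k+1 < n) (hj : j < n) : sw k j < n := by
  unfold sw; split_ifs <;> omega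

lemma count_swap {n k : ℕ} (hk : k + 1 < n) (p q : ℕ → Prop)
    [DecidablePred p] [DecidablePred q]
    (h : ∀ j, j < n → (p j ↔ q (sw k j))) :
    ((Finset.range n).filter p).card = ((Finset.range n).filter q).card := by
  apply Finset.card_bij' (fun j _ => sw k j) (fun j _ => sw k j)
  · intro a ha
    simp only [Finset.mem_filter, Finset.mem_range] at ha ⊢
    exact ⟨sw_lt k a hk ha.1, (h a ha.1).1 ha.2⟩
  · intro a ha
    simp only [Finset.mem_filter, Finset.mem_range] at ha ⊢
    refine ⟨sw_lt k a hk ha.1, ?_⟩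
    have h2 := h (sw k a) (sw_lt k a hk ha.1)
    rw [sw_sw] at h2
    exact h2.2 ha.2
  · intro a _; exact sw_sw k a
  · intro a _; exact sw_sw k a

lemma map_range_decomp (f : ℕ → ℕ) (a b c : ℕ) :
    (List.range (a + (1 + (1 + (b + (1 + c)))))).map f =
      (List.range a).map f ++ f a :: f (a+1) ::
        ((List.range b).map (fun i => f (a+1+1+i)) ++ f (a+1+1+b) ::
          (List.range c).map (fun i => f (a+1+1+b+1+i))) := by
  simp only [List.range_add, List.map_append, List.map_map, Function.comp_def]
  simp [List.range_succ, add_assoc, add_comm, add_left_comm]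

lemma stdW_sylvAdj {w1 w2 : List ℕ} (h : SylvAdj w1 w2) : SylvAdj (stdW w1) (stdW w2) := by
  obtain ⟨u, u', u'', x, y, z, hxy, hyz, h1, h2⟩ := h
  subst h1 h2
  have hxz : x < z := lt_of_le_of_lt hxy hyz
  set t : List ℕ := u' ++ y :: u'' with ht
  set k := u.length with hk
  set L' := u'.length with hL'
  set L'' := u''.length with hL''
  set W1 : List ℕ := u ++ x :: z :: t with hW1
  set W2 : List ℕ := u ++ z :: x :: t with hW2
  set n := k + (1 + (1 + (L' + (1 + L'')))) with hn
  have hW1' : W1 = (u ++ [x, z]) ++ t := by simp [hW1]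
  have hW2' : W2 = (u ++ [z, x]) ++ t := by simp [hW2]
  have hlen1 : W1.length = n := by simp [hW1, ht, hn]; omega
  have hlen2 : W2.length = n := by simp [hW2, ht, hn]; omega
  have hg1k : W1.getD k 0 = x := by
    rw [hW1, List.getD_append_right _ _ _ _ (le_refl _)]; simp
  have hg2k : W2.getD k 0 = z := by
    rw [hW2, List.getD_append_right _ _ _ _ (le_refl _)]; simp
  have hg1k1 : W1.getD (k+1) 0 = z := by
    rw [hW1, List.getD_append_right _ _ _ _ (by omega : u.length ≤ k+1)]
    simp [show k + 1 - u.length = 1 from by omega]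
  have hg2k1 : W2.getD (k+1) 0 = x := by
    rw [hW2, List.getD_append_right _ _ _ _ (by omega : u.length ≤ k+1)]
    simp [show k + 1 - u.length = 1 from by omega]
  have hgm : W1.getD (k+1+1+L') 0 = y := by
    rw [hW1', List.getD_append_right _ _ _ _ (by simp; omega)]
    rw [show k+1+1+L' - (u ++ [x, z]).length = L' from by simp; omega, ht,
      List.getD_append_right _ _ _ _ (le_refl _)]
    simp
  have hsame : ∀ j, j ≠ k → j ≠ k+1 → W1.getD j 0 = W2.getD j 0 := by
    intro j hjk hjk1
    rcases lt_or_ge j k with hj | hj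
    · rw [hW1, hW2, List.getD_append _ _ _ _ hj, List.getD_append _ _ _ _ hj]
    · have e1 : W1.getD j 0 = t.getD (j - (k+1+1)) 0 := by
        rw [hW1', List.getD_append_right _ _ _ _ (by simp; omega)]
        congr 1
        simp; omega
      have e2 : W2.getD j 0 = t.getD (j - (k+1+1)) 0 := by
        rw [hW2', List.getD_append_right _ _ _ _ (by simp; omega)]
        congr 1
        simp; omega
      rw [e1, e2]
  -- equal standardization values off the swapped positions
  have hA : ∀ i, i ≠ k → i ≠ k+1 → fstd W1 i = fstd W2 i := by
    intro i hik hik1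
    unfold fstd
    rw [hlen1, hlen2]
    congr 1
    refine count_swap (n := n) (k := k) (by omega) _ _ ?_
    intro j hj
    have hgi := hsame i hik hik1
    rcases eq_or_ne j k with rfl | hjk
    · rw [show sw k k = k+1 from by simp [sw], hg1k, hg2k1, hgi]
      generalize W2.getD i 0 = c
      omega
    rcases eq_or_ne j (k+1) with rfl | hjk1
    · rw [show sw k (k+1) = k from by simp [sw], hg1k1, hg2k, hgi]
      generalize W2.getD i 0 = c
      omega
    · rw [show sw k j = j from by simp [sw, hjk, hjk1], hsame j hjk hjk1, hgi]
  have hB1 : fstd W1 k = fstd W2 (k+1) := by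
    unfold fstd
    rw [hlen1, hlen2]
    congr 1
    refine count_swap (n := n) (k := k) (by omega) _ _ ?_
    intro j hj
    rcases eq_or_ne j k with rfl | hjk
    · rw [show sw k k = k+1 from by simp [sw], hg1k, hg2k1]
      omega
    rcases eq_or_ne j (k+1) with rfl | hjk1
    · rw [show sw k (k+1) = k from by simp [sw], hg1k1, hg1k, hg2k, hg2k1]
      omega
    · rw [show sw k j = j from by simp [sw, hjk, hjk1], hsame j hjk hjk1, hg1k, hg2k1]
      generalize W2.getD j 0 = a
      omega
  have hB2 : fstd W1 (k+1) = fstd W2 k := by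
    unfold fstd
    rw [hlen1, hlen2]
    congr 1
    refine count_swap (n := n) (k := k) (by omega) _ _ ?_
    intro j hj
    rcases eq_or_ne j k with rfl | hjk
    · rw [show sw k k = k+1 from by simp [sw], hg1k, hg1k1, hg2k, hg2k1]
      omega
    rcases eq_or_ne j (k+1) with rfl | hjk1
    · rw [show sw k (k+1) = k from by simp [sw], hg1k1, hg2k]
      omega
    · rw [show sw k j = j from by simp [sw, hjk, hjk1], hsame j hjk hjk1, hg1k1, hg2k]
      generalize W2.getD j 0 = a
      omega
  have hC1 : fstd W1 k ≤ fstd W1 (k+1+1+L') := by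
    unfold fstd
    have hsub : ((Finset.range W1.length).filter (fun j =>
        W1.getD j 0 < W1.getD k 0 ∨ (W1.getD j 0 = W1.getD k 0 ∧ j < k))) ⊆
        ((Finset.range W1.length).filter (fun j =>
        W1.getD j 0 < W1.getD (k+1+1+L') 0 ∨ (W1.getD j 0 = W1.getD (k+1+1+L') 0 ∧ j < k+1+1+L'))) := by
      intro j hj
      simp only [Finset.mem_filter, Finset.mem_range] at hj ⊢
      obtain ⟨hjn, hp⟩ := hj
      rw [hg1k] at hp
      rw [hgm]
      refine ⟨hjn, ?_⟩
      revert hp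
      generalize W1.getD j 0 = a
      intro hp
      omega
    have := Finset.card_le_card hsub
    omega
  have hC2 : fstd W1 (k+1+1+L') < fstd W1 (k+1) := by
    unfold fstd
    have hsub : ((Finset.range W1.length).filter (fun j =>
        W1.getD j 0 < W1.getD (k+1+1+L') 0 ∨ (W1.getD j 0 = W1.getD (k+1+1+L') 0 ∧ j < k+1+1+L'))) ⊆
        ((Finset.range W1.length).filter (fun j =>
        W1.getD j 0 < W1.getD (k+1) 0 ∨ (W1.getD j 0 = W1.getD (k+1) 0 ∧ j < k+1))) := by
      intro j hj
      simp only [Finset.mem_filter, Finset.mem_range] at hj ⊢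
      obtain ⟨hjn, hp⟩ := hj
      rw [hgm] at hp
      rw [hg1k1]
      refine ⟨hjn, ?_⟩
      revert hp
      generalize W1.getD j 0 = a
      intro hp
      omega
    have hss : ((Finset.range W1.length).filter (fun j =>
        W1.getD j 0 < W1.getD (k+1+1+L') 0 ∨ (W1.getD j 0 = W1.getD (k+1+1+L') 0 ∧ j < k+1+1+L'))) ⊂
        ((Finset.range W1.length).filter (fun j =>
        W1.getD j 0 < W1.getD (k+1) 0 ∨ (W1.getD j 0 = W1.getD (k+1) 0 ∧ j < k+1))) := by
      rw [Finset.ssubset_iff_of_subset hsub]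
      refine ⟨k+1+1+L', ?_, ?_⟩
      · simp only [Finset.mem_filter, Finset.mem_range]
        rw [hgm, hg1k1, hlen1]
        exact ⟨by omega, Or.inl hyz⟩
      · simp only [Finset.mem_filter, Finset.mem_range]
        rw [hgm]
        omega
    have := Finset.card_lt_card hss
    omega
  have hE1 : stdW W1 = (List.range k).map (fstd W1) ++ fstd W1 k :: fstd W1 (k+1) ::
      ((List.range L').map (fun i => fstd W1 (k+1+1+i)) ++ fstd W1 (k+1+1+L') ::
        (List.range L'').map (fun i => fstd W1 (k+1+1+L'+1+i))) := by
    rw [stdW_eq_map, hlen1, hn]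
    exact map_range_decomp _ _ _ _
  have hE2 : stdW W2 = (List.range k).map (fstd W2) ++ fstd W2 k :: fstd W2 (k+1) ::
      ((List.range L').map (fun i => fstd W2 (k+1+1+i)) ++ fstd W2 (k+1+1+L') ::
        (List.range L'').map (fun i => fstd W2 (k+1+1+L'+1+i))) := by
    rw [stdW_eq_map, hlen2, hn]
    exact map_range_decomp _ _ _ _
  have hmap1 : (List.range k).map (fstd W2) = (List.range k).map (fstd W1) := by
    apply List.map_congr_left
    intro i hi
    rw [List.mem_range] at hi
    exact (hA i (by omega) (by omega)).symm
  have hmap2 : (List.range L').map (fun i => fstd W2 (k+1+1+i)) =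
      (List.range L').map (fun i => fstd W1 (k+1+1+i)) := by
    apply List.map_congr_left
    intro i hi
    exact (hA _ (by omega) (by omega)).symm
  have hmap3 : (List.range L'').map (fun i => fstd W2 (k+1+1+L'+1+i)) =
      (List.range L'').map (fun i => fstd W1 (k+1+1+L'+1+i)) := by
    apply List.map_congr_left
    intro i hi
    exact (hA _ (by omega) (by omega)).symm
  have hym : fstd W2 (k+1+1+L') = fstd W1 (k+1+1+L') := (hA _ (by omega) (by omega)).symm
  refine ⟨(List.range k).map (fstd W1), (List.range L').map (fun i => fstd W1 (k+1+1+i)),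
    (List.range L'').map (fun i => fstd W1 (k+1+1+L'+1+i)),
    fstd W1 k, fstd W1 (k+1+1+L'), fstd W1 (k+1), hC1, hC2, hE1, ?_⟩
  rw [hE2, hmap1, hmap2, hmap3, hym, ← hB1, ← hB2]

/-- If two words are sylvester congruent, then so are their standardizations. -/
theorem stmt12 (w1 w2 : List ℕ) (h : SylvCong w1 w2) :
    SylvCong (stdW w1) (stdW w2) := by
  unfold SylvCong at h ⊢
  induction h with
  | rel a b hab => exact Relation.EqvGen.rel _ _ (stdW_sylvAdj hab)
  | refl a => exact Relation.EqvGen.refl _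
  | symm a b _ ih => exact Relation.EqvGen.symm _ _ ih
  | trans a b c _ _ ih1 ih2 => exact Relation.EqvGen.trans _ _ _ ih1 ih2
end

section
/- Every sylvester congruence class of permutations contains a word w with the separation property w = u v y, where y is a letter, u is empty or consists only of letters greater than y, and v is empty or consists only of letters smaller than y; requiring u and v to recursively satisfy the separation property yields a unique normal form in each class, and the number of such normal forms of length n satisfies the Catalan recurrence f_n = Σ_{i=1}^{n} f_{i-1} f_{n-i} with f_0 = f_1 = 1. -/
open scoped Classical

/-- Recursive separation property: `w = u v y` where the letters of `u` are all
greater than `y`, those of `v` are all smaller, and `u`, `v` recursively satisfy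
the separation property. -/
inductive SepNF : List ℕ → Prop
  | nil : SepNF []
  | node (u v : List ℕ) (y : ℕ) :
      SepNF u → SepNF v → (∀ a ∈ u, y < a) → (∀ a ∈ v, a < y) →
      SepNF (u ++ v ++ [y])

/-- The number of normal forms (words with the recursive separation property)
among the permutations of `S_k`. -/
noncomputable def sepCount (k : ℕ) : ℕ :=
  Nat.card {l : List ℕ // l.Perm ((List.range k).map (· + 1)) ∧ SepNF l}

namespace SylvP

lemma adj_perm {w1 w2 : List ℕ} (h : SylvAdj w1 w2) : w1.Perm w2 := by
  obtain ⟨u, u', u'', x, y, z, _, _, rfl, rfl⟩ := h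
  exact (List.Perm.append_left u (List.Perm.swap z x _))

lemma cong_perm {w1 w2 : List ℕ} (h : SylvCong w1 w2) : w1.Perm w2 := by
  induction h with
  | rel a b hab => exact adj_perm hab
  | refl a => exact List.Perm.refl a
  | symm a b _ ih => exact ih.symm
  | trans a b c _ _ ih1 ih2 => exact ih1.trans ih2

lemma cong_refl (l : List ℕ) : SylvCong l l := Relation.EqvGen.refl l
lemma cong_symm {a b} (h : SylvCong a b) : SylvCong b a := Relation.EqvGen.symm _ _ h
lemma cong_trans {a b c} (h1 : SylvCong a b) (h2 : SylvCong b c) : SylvCong a c :=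
  Relation.EqvGen.trans _ _ _ h1 h2

lemma adj_append_left (p : List ℕ) {w1 w2 : List ℕ} (h : SylvAdj w1 w2) :
    SylvAdj (p ++ w1) (p ++ w2) := by
  obtain ⟨u, u', u'', x, y, z, h1, h2, rfl, rfl⟩ := h
  exact ⟨p ++ u, u', u'', x, y, z, h1, h2, by simp, by simp⟩

lemma adj_append_right (s : List ℕ) {w1 w2 : List ℕ} (h : SylvAdj w1 w2) :
    SylvAdj (w1 ++ s) (w2 ++ s) := by
  obtain ⟨u, u', u'', x, y, z, h1, h2, rfl, rfl⟩ := h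
  exact ⟨u, u', u'' ++ s, x, y, z, h1, h2, by simp, by simp⟩

lemma cong_append_left (p : List ℕ) {w1 w2 : List ℕ} (h : SylvCong w1 w2) :
    SylvCong (p ++ w1) (p ++ w2) := by
  induction h with
  | rel a b hab => exact Relation.EqvGen.rel _ _ (adj_append_left p hab)
  | refl a => exact cong_refl _
  | symm a b _ ih => exact cong_symm ih
  | trans a b c _ _ ih1 ih2 => exact cong_trans ih1 ih2

lemma cong_append_right (s : List ℕ) {w1 w2 : List ℕ} (h : SylvCong w1 w2) :
    SylvCong (w1 ++ s) (w2 ++ s) := by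
  induction h with
  | rel a b hab => exact Relation.EqvGen.rel _ _ (adj_append_right s hab)
  | refl a => exact cong_refl _
  | symm a b _ ih => exact cong_symm ih
  | trans a b c _ _ ih1 ih2 => exact cong_trans ih1 ih2

lemma move_small {a y : ℕ} (g rest : List ℕ) (hay : a < y) (hg : ∀ b ∈ g, y < b)
    (hy : y ∈ rest) : SylvCong (a :: (g ++ rest)) (g ++ a :: rest) := by
  induction g with
  | nil => exact cong_refl _
  | cons b g' ih =>
    have hb : y < b := hg b (by simp)
    obtain ⟨r1, r2, rfl⟩ := List.append_of_mem hy
    have step : SylvAdj (a :: b :: (g' ++ (r1 ++ y :: r2))) (b :: a :: (g' ++ (r1 ++ y :: r2))) :=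
      ⟨[], g' ++ r1, r2, a, y, b, le_of_lt hay, hb, by simp, by simp⟩
    have t2 : SylvCong (b :: a :: (g' ++ (r1 ++ y :: r2))) (b :: (g' ++ a :: (r1 ++ y :: r2))) := by
      simpa using cong_append_left [b] (ih (fun c hc => hg c (by simp [hc])))
    exact cong_trans (Relation.EqvGen.rel _ _ step) t2

lemma partition_step {y : ℕ} (m : List ℕ) (hm : ∀ a ∈ m, a ≠ y) :
    SylvCong (m ++ [y])
      ((m.filter (y < ·)) ++ ((m.filter (· < y)) ++ [y])) := by
  induction m with
  | nil => simp; exact cong_refl _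
  | cons a m' ih =>
    have ih' := ih (fun c hc => hm c (by simp [hc]))
    have pre := cong_append_left [a] ih'
    by_cases hya : y < a
    · have : (List.filter (fun b => decide (y < b)) (a :: m')) =
        a :: (List.filter (fun b => decide (y < b)) m') := by
        simp [List.filter_cons, hya]
      rw [this]
      have h2 : (List.filter (fun b => decide (b < y)) (a :: m')) =
        (List.filter (fun b => decide (b < y)) m') := by
        simp [List.filter_cons, Nat.not_lt.mpr (le_of_lt hya)]
      rw [h2]
      simpa using pre
    · have hay : a < y := lt_of_le_of_ne (Nat.not_lt.mp hya) (hm a (by simp))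
      have h1 : (List.filter (fun b => decide (y < b)) (a :: m')) =
        (List.filter (fun b => decide (y < b)) m') := by
        simp [List.filter_cons, hya]
      have h2 : (List.filter (fun b => decide (b < y)) (a :: m')) =
        a :: (List.filter (fun b => decide (b < y)) m') := by
        simp [List.filter_cons, hay]
      rw [h1, h2]
      refine cong_trans (by simpa using pre) ?_
      exact move_small _ _ hay (fun b hb => by
        have := List.mem_filter.mp hb; simpa using this.2) (by simp)

lemma exists_sepNF_aux : ∀ N : ℕ, ∀ l : List ℕ, l.length ≤ N → l.Nodup →
    ∃ w : List ℕ, SylvCong l w ∧ SepNF w := by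
  intro N
  induction N with
  | zero => intro l hl _; rw [List.length_eq_zero_iff.mp (Nat.le_zero.mp hl)]
            exact ⟨[], cong_refl _, SepNF.nil⟩
  | succ N ih =>
    intro l hl hnd
    rcases List.eq_nil_or_concat l with rfl | ⟨m, y, rfl⟩
    · exact ⟨[], cong_refl _, SepNF.nil⟩
    · simp only [List.concat_eq_append] at hl hnd ⊢
      have hmnd : m.Nodup := (List.nodup_append.mp hnd).1
      have hym : y ∉ m := by
        have := (List.nodup_append'.mp hnd).2.2
        intro hy; exact this hy (by simp)
      have hmy : ∀ a ∈ m, a ≠ y := fun a ha h => hym (h ▸ ha)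
      set u := m.filter (y < ·) with hu
      set v := m.filter (· < y) with hv
      have hlen : m.length ≤ N := by
        have := hl; simp at this; omega
      have hul : u.length ≤ N := le_trans (List.length_filter_le _ _) hlen
      have hvl : v.length ≤ N := le_trans (List.length_filter_le _ _) hlen
      obtain ⟨u', hu1, hu2⟩ := ih u hul (hmnd.filter _)
      obtain ⟨v', hv1, hv2⟩ := ih v hvl (hmnd.filter _)
      refine ⟨u' ++ v' ++ [y], ?_, ?_⟩
      · have c1 : SylvCong (m ++ [y]) (u ++ (v ++ [y])) := partition_step m hmy
        have c2 : SylvCong (u ++ (v ++ [y])) (u' ++ (v ++ [y])) := cong_append_right _ hu1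
        have c3 : SylvCong (u' ++ (v ++ [y])) (u' ++ (v' ++ [y])) :=
          cong_append_left u' (cong_append_right [y] hv1)
        have := cong_trans c1 (cong_trans c2 c3)
        simpa [List.append_assoc] using this
      · refine SepNF.node u' v' y hu2 hv2 ?_ ?_
        · intro a ha
          have : a ∈ u := (cong_perm hu1).symm.mem_iff.mp ha
          have := List.mem_filter.mp this; simpa using this.2
        · intro a ha
          have : a ∈ v := (cong_perm hv1).symm.mem_iff.mp ha
          have := List.mem_filter.mp this; simpa using this.2

lemma exists_sepNF (l : List ℕ) (hnd : l.Nodup) :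
    ∃ w : List ℕ, SylvCong l w ∧ SepNF w :=
  exists_sepNF_aux l.length l le_rfl hnd




inductive BT : Type
  | leaf : BT
  | node : BT → ℕ → BT → BT

def ins (x : ℕ) : BT → BT
  | .leaf => .node .leaf x .leaf
  | .node l a r => if x < a then .node (ins x l) a r else .node l a (ins x r)

def telts : BT → List ℕ
  | .leaf => []
  | .node l a r => telts l ++ a :: telts r

def IsBST : BT → Prop
  | .leaf => True
  | .node l a r => (∀ x ∈ telts l, x < a) ∧ (∀ x ∈ telts r, a < x) ∧ IsBST l ∧ IsBST r

lemma mem_ins {z x : ℕ} {t : BT} : z ∈ telts (ins x t) ↔ z = x ∨ z ∈ telts t := by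
  induction t with
  | leaf => simp [ins, telts]
  | node l a r ihl ihr =>
    by_cases h : x < a
    · simp [ins, h, telts, ihl]; tauto
    · simp [ins, h, telts, ihr]; tauto

lemma isBST_ins {x : ℕ} {t : BT} (ht : IsBST t) (hx : x ∉ telts t) : IsBST (ins x t) := by
  induction t with
  | leaf => simp [ins, IsBST, telts]
  | node l a r ihl ihr =>
    obtain ⟨h1, h2, h3, h4⟩ := ht
    have hxa : x ≠ a := by intro h; apply hx; simp [telts, h]
    have hxl : x ∉ telts l := fun h => hx (by simp [telts, h])
    have hxr : x ∉ telts r := fun h => hx (by simp [telts, h])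
    by_cases h : x < a
    · rw [ins, if_pos h]
      refine ⟨?_, h2, ihl h3 hxl, h4⟩
      · intro w hw; rcases mem_ins.mp hw with rfl | hw'
        · exact h
        · exact h1 w hw'
    · rw [ins]
      rw [if_neg h]
      refine ⟨h1, ?_, h3, ihr h4 hxr⟩
      intro w hw; rcases mem_ins.mp hw with rfl | hw'
      · exact lt_of_le_of_ne (Nat.not_lt.mp h) (Ne.symm hxa)
      · exact h2 w hw'

def bst (w : List ℕ) : BT := w.foldr ins .leaf

lemma mem_bst {z : ℕ} {w : List ℕ} : z ∈ telts (bst w) ↔ z ∈ w := by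
  induction w with
  | nil => simp [bst, telts]
  | cons a t ih => simp [bst, List.foldr_cons, mem_ins]; rw [← bst] at *; simp [ih]

lemma isBST_bst {w : List ℕ} (h : w.Nodup) : IsBST (bst w) := by
  induction w with
  | nil => simp [bst, IsBST]
  | cons a t ih =>
    have : bst (a :: t) = ins a (bst t) := rfl
    rw [this]
    exact isBST_ins (ih (List.nodup_cons.mp h).2)
      (fun hm => (List.nodup_cons.mp h).1 (mem_bst.mp hm))

lemma ins_comm {x y z : ℕ} {t : BT} (ht : IsBST t) (hy : y ∈ telts t)
    (hxy : x < y) (hyz : y < z) : ins x (ins z t) = ins z (ins x t) := by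
  induction t with
  | leaf => simp [telts] at hy
  | node l a r ihl ihr =>
    obtain ⟨h1, h2, h3, h4⟩ := ht
    by_cases hx : x < a
    · by_cases hz : z < a
      · have hyl : y ∈ telts l := by
          rcases (by simpa [telts] using hy : y ∈ telts l ∨ y = a ∨ y ∈ telts r) with h | rfl | h
          · exact h
          · omega
          · exact absurd (h2 y h) (by omega)
        simp only [ins, if_pos hx, if_pos hz]
        rw [ihl h3 hyl]
      · simp only [ins, if_pos hx, if_neg hz]
    · have hz : ¬ z < a := by omega
      have hyr : y ∈ telts r := by
        rcases (by simpa [telts] using hy : y ∈ telts l ∨ y = a ∨ y ∈ telts r) with h | rfl | h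
        · exact absurd (h1 y h) (by omega)
        · omega
        · exact h
      simp only [ins, if_neg hx, if_neg hz]
      rw [ihr h4 hyr]

lemma adj_bst {w1 w2 : List ℕ} (h : SylvAdj w1 w2) (hn : w1.Nodup) : bst w1 = bst w2 := by
  obtain ⟨u, u', u'', x, y, z, hxy, hyz, rfl, rfl⟩ := h
  have hkey : ins x (ins z (bst (u' ++ y :: u''))) = ins z (ins x (bst (u' ++ y :: u''))) := by
    have hnd2 : (x :: z :: (u' ++ y :: u'')).Nodup := (List.nodup_append.mp hn).2.1
    have hxny : x ≠ y := by
      have := (List.nodup_cons.mp hnd2).1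
      intro h; exact this (by simp [h])
    have hnd3 : (u' ++ y :: u'').Nodup :=
      (List.nodup_cons.mp (List.nodup_cons.mp hnd2).2).2
    exact ins_comm (isBST_bst hnd3) (mem_bst.mpr (by simp))
      (lt_of_le_of_ne hxy hxny) hyz
  show (u ++ _).foldr ins .leaf = (u ++ _).foldr ins .leaf
  rw [List.foldr_append, List.foldr_append]
  simp only [List.foldr_cons]
  rw [show List.foldr ins BT.leaf (u' ++ y :: u'') = bst (u' ++ y :: u'') from rfl, hkey]

lemma cong_bst {w1 w2 : List ℕ} (h : SylvCong w1 w2) : w1.Nodup → bst w1 = bst w2 := by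
  induction h with
  | rel a b hab => exact fun hn => adj_bst hab hn
  | refl a => exact fun _ => rfl
  | symm a b hab ih => exact fun hnb => (ih ((cong_perm hab).nodup_iff.mpr hnb)).symm
  | trans a b c hab hbc ih1 ih2 =>
      exact fun hna => (ih1 hna).trans (ih2 ((cong_perm hab).nodup_iff.mp hna))

def readT : BT → List ℕ
  | .leaf => []
  | .node l a r => readT r ++ readT l ++ [a]

lemma foldr_ins_small {v : List ℕ} {l r : BT} {a : ℕ} (h : ∀ b ∈ v, b < a) :
    v.foldr ins (.node l a r) = .node (v.foldr ins l) a r := by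
  induction v with
  | nil => rfl
  | cons b v' ih =>
    simp only [List.foldr_cons]
    rw [ih (fun c hc => h c (by simp [hc]))]
    simp [ins, h b (by simp)]

lemma foldr_ins_big {u : List ℕ} {l r : BT} {a : ℕ} (h : ∀ b ∈ u, a < b) :
    u.foldr ins (.node l a r) = .node l a (u.foldr ins r) := by
  induction u with
  | nil => rfl
  | cons b u' ih =>
    simp only [List.foldr_cons]
    rw [ih (fun c hc => h c (by simp [hc]))]
    have : ¬ b < a := by have := h b (by simp); omega
    simp [ins, this]

lemma read_bst {w : List ℕ} (h : SepNF w) : readT (bst w) = w := by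
  induction h with
  | nil => rfl
  | node u v y hu hv hgu hlv ihu ihv =>
    have e1 : bst (u ++ v ++ [y]) = u.foldr ins (v.foldr ins (bst [y])) := by
      show (u ++ v ++ [y]).foldr ins .leaf = _
      rw [List.append_assoc, List.foldr_append, List.foldr_append]
      rfl
    have e2 : bst [y] = BT.node .leaf y .leaf := rfl
    rw [e1, e2, foldr_ins_small hlv, foldr_ins_big hgu]
    show readT (u.foldr ins .leaf) ++ readT (v.foldr ins .leaf) ++ [y] = _
    rw [show (u.foldr ins .leaf) = bst u from rfl, show (v.foldr ins .leaf) = bst v from rfl,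
      ihu, ihv]

lemma sepNF_unique {w1 w2 : List ℕ} (h1 : SepNF w1) (h2 : SepNF w2)
    (hn : w1.Nodup) (hc : SylvCong w1 w2) : w1 = w2 := by
  rw [← read_bst h1, ← read_bst h2, cong_bst hc hn]



def bl (k : ℕ) : List ℕ := (List.range k).map (· + 1)

def NFw (k : ℕ) := {l : List ℕ // l.Perm (bl k) ∧ SepNF l}

lemma sepCount_eq (k : ℕ) : sepCount k = Nat.card (NFw k) := rfl

lemma mem_bl {a k : ℕ} : a ∈ bl k ↔ 1 ≤ a ∧ a ≤ k := by
  simp only [bl, List.mem_map, List.mem_range]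
  constructor
  · rintro ⟨b, hb, rfl⟩; omega
  · rintro ⟨h1, h2⟩; exact ⟨a - 1, by omega, by omega⟩

lemma nodup_bl (k : ℕ) : (bl k).Nodup :=
  (List.nodup_range).map (fun a b h => by omega)

lemma length_bl (k : ℕ) : (bl k).length = k := by simp [bl]

lemma sepNF_map_add (c : ℕ) {l : List ℕ} (h : SepNF l) : SepNF (l.map (· + c)) := by
  induction h with
  | nil => exact SepNF.nil
  | node u v y hu hv hgu hlv ihu ihv =>
    rw [List.map_append, List.map_append]
    refine SepNF.node _ _ (y + c) ihu ihv ?_ ?_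
    · intro a ha; obtain ⟨b, hb, rfl⟩ := List.mem_map.mp ha
      have := hgu b hb; omega
    · intro a ha; obtain ⟨b, hb, rfl⟩ := List.mem_map.mp ha
      have := hlv b hb; omega

lemma sepNF_map_sub (c : ℕ) {l : List ℕ} (h : SepNF l) (hc : ∀ a ∈ l, c < a) :
    SepNF (l.map (· - c)) := by
  induction h with
  | nil => exact SepNF.nil
  | node u v y hu hv hgu hlv ihu ihv =>
    have hcy : c < y := hc y (by simp)
    rw [List.map_append, List.map_append]
    refine SepNF.node _ _ (y - c) (ihu fun a ha => hc a (by simp [ha]))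
      (ihv fun a ha => hc a (by simp [ha])) ?_ ?_
    · intro a ha; obtain ⟨b, hb, rfl⟩ := List.mem_map.mp ha
      have := hgu b hb; omega
    · intro a ha; obtain ⟨b, hb, rfl⟩ := List.mem_map.mp ha
      have h1 := hlv b hb
      have h2 := hc b (by simp [hb])
      omega

lemma sep_append_inj {A B A' B' : List ℕ} {y : ℕ}
    (hA : ∀ a ∈ A, y < a) (hA' : ∀ a ∈ A', y < a)
    (hB : ∀ a ∈ B, a < y) (hB' : ∀ a ∈ B', a < y)
    (h : A ++ B = A' ++ B') : A = A' ∧ B = B' := by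
  induction A generalizing A' with
  | nil =>
    cases A' with
    | nil => simpa using h
    | cons a A'' =>
      exfalso
      have haB : a ∈ B := by
        have : B = a :: (A'' ++ B') := by simpa using h
        rw [this]; simp
      have := hB a haB
      have := hA' a (by simp)
      omega
  | cons a A2 ih =>
    cases A' with
    | nil =>
      exfalso
      have haB : a ∈ B' := by
        have : a :: (A2 ++ B) = B' := by simpa using h
        rw [← this]; simp
      have := hB' a haB
      have := hA a (by simp)
      omega
    | cons a' A2' =>
      have h1 : a = a' ∧ A2 ++ B = A2' ++ B' := by simpa using h
      obtain ⟨rfl, h2⟩ := h1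
      obtain ⟨e1, e2⟩ := ih (fun b hb => hA b (by simp [hb])) (fun b hb => hA' b (by simp [hb])) h2
      exact ⟨by rw [e1], e2⟩

instance NFw_finite (k : ℕ) : Finite (NFw k) := by
  classical
  have : Fintype {l' : List ℕ // l'.Perm (bl k)} := by
    apply Fintype.subtype (bl k).permutations.toFinset
    intro x; rw [List.mem_toFinset, List.mem_permutations]
  exact Finite.of_injective (fun x : NFw k => (⟨x.1, x.2.1⟩ : {l' : List ℕ // l'.Perm (bl k)}))
    (by rintro ⟨a, ha⟩ ⟨b, hb⟩ h; exact Subtype.ext (by simpa using h))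

lemma bl_decomp {m i : ℕ} (him : i < m) :
    bl m = (bl i ++ [i + 1]) ++ (bl (m - 1 - i)).map (· + (i + 1)) := by
  have h1 : m = (i + 1) + (m - 1 - i) := by omega
  rw [bl]
  rw [show List.range m = List.range ((i+1) + (m-1-i)) from by rw [← h1]]
  rw [List.range_add, List.map_append]
  congr 1
  · rw [List.range_succ, List.map_append]
    rfl
  · rw [bl, List.map_map, List.map_map]
    congr 1
    funext x
    simp; omega

lemma mk_mem {m i : ℕ} (him : i < m) {v u : List ℕ}
    (hv : v.Perm (bl i) ∧ SepNF v) (hu : u.Perm (bl (m - 1 - i)) ∧ SepNF u) :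
    (u.map (· + (i + 1)) ++ v ++ [i + 1]).Perm (bl m) ∧
      SepNF (u.map (· + (i + 1)) ++ v ++ [i + 1]) := by
  constructor
  · have p1 : (u.map (· + (i + 1)) ++ (v ++ [i + 1])).Perm
        ((v ++ [i + 1]) ++ u.map (· + (i + 1))) := List.perm_append_comm
    have p2 : ((v ++ [i + 1]) ++ u.map (· + (i + 1))).Perm
        ((bl i ++ [i + 1]) ++ (bl (m - 1 - i)).map (· + (i + 1))) :=
      List.Perm.append (hv.1.append (List.Perm.refl _)) (hu.1.map _)
    have := p1.trans p2
    rw [← bl_decomp him] at this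
    simpa [List.append_assoc] using this
  · refine SepNF.node _ _ (i + 1) (sepNF_map_add _ hu.2) hv.2 ?_ ?_
    · intro a ha; obtain ⟨b, hb, rfl⟩ := List.mem_map.mp ha
      have := mem_bl.mp (hu.1.mem_iff.mp hb)
      omega
    · intro a ha
      have := mem_bl.mp (hv.1.mem_iff.mp ha)
      omega

def Fmap (m : ℕ) (p : Σ i : Fin m, NFw i × NFw (m - 1 - i)) : NFw m :=
  ⟨p.2.2.1.map (· + (p.1.1 + 1)) ++ p.2.1.1 ++ [p.1.1 + 1],
    mk_mem p.1.2 p.2.1.2 p.2.2.2⟩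

lemma card_rec {m : ℕ} (hm : 1 ≤ m) :
    Nat.card (NFw m) = ∑ i ∈ Finset.range m, Nat.card (NFw i) * Nat.card (NFw (m - 1 - i)) := by
  classical
  have hinj : Function.Injective (Fmap m) := by
    rintro ⟨i, ⟨v, hv⟩, ⟨u, hu⟩⟩ ⟨i', ⟨v', hv'⟩, ⟨u', hu'⟩⟩ h
    have hl : u.map (· + (i.1 + 1)) ++ v ++ [i.1 + 1] =
        u'.map (· + (i'.1 + 1)) ++ v' ++ [i'.1 + 1] := congrArg Subtype.val h
    have h2 := List.append_inj' hl (by simp)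
    have hii : i = i' := by
      apply Fin.ext
      have := h2.2; simp at this; omega
    subst hii
    have h3 := sep_append_inj (y := i.1 + 1)
      (fun a ha => by obtain ⟨b, hb, rfl⟩ := List.mem_map.mp ha
                      have := mem_bl.mp (hu.1.mem_iff.mp hb)
                      show i.1 + 1 < b + (i.1 + 1); omega)
      (fun a ha => by obtain ⟨b, hb, rfl⟩ := List.mem_map.mp ha
                      have := mem_bl.mp (hu'.1.mem_iff.mp hb)
                      show i.1 + 1 < b + (i.1 + 1); omega)
      (fun a ha => by have := mem_bl.mp (hv.1.mem_iff.mp ha); omega)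
      (fun a ha => by have := mem_bl.mp (hv'.1.mem_iff.mp ha); omega)
      h2.1
    have huu : u = u' := by
      have : Function.Injective (· + (i.1 + 1) : ℕ → ℕ) := add_left_injective (i.1 + 1)
      exact List.map_injective_iff.mpr this h3.1
    have hvv : v = v' := h3.2
    subst huu; subst hvv
    rfl
  have hsurj : Function.Surjective (Fmap m) := by
    rintro ⟨l, hperm, hsep⟩
    have hnd : l.Nodup := hperm.nodup_iff.mpr (nodup_bl m)
    have hmem : ∀ a, a ∈ l ↔ 1 ≤ a ∧ a ≤ m := fun a => by
      rw [hperm.mem_iff, mem_bl]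
    cases hsep with
    | nil =>
      exfalso
      have := hperm.length_eq
      rw [length_bl] at this
      simp at this; omega
    | node u v y hu hv hgu hlv =>
      have hy : 1 ≤ y ∧ y ≤ m := (hmem y).mp (by simp)
      have hvnd : v.Nodup := by
        have hs : v.Sublist (u ++ (v ++ [y])) :=
          ((List.sublist_append_left v [y]).trans (List.sublist_append_right u (v ++ [y])))
        exact hs.nodup (by simpa [List.append_assoc] using hnd)
      have hund : u.Nodup := by
        have hs : u.Sublist (u ++ (v ++ [y])) := List.sublist_append_left u _
        exact hs.nodup (by simpa [List.append_assoc] using hnd)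
      -- v.Perm (bl (y - 1))
      have hvperm : v.Perm (bl (y - 1)) := by
        apply List.perm_of_nodup_nodup_toFinset_eq hvnd (nodup_bl _)
        ext a
        simp only [List.mem_toFinset, mem_bl]
        constructor
        · intro ha
          have h1 : a ∈ u ++ v ++ [y] := by simp [ha]
          have := (hmem a).mp h1
          have := hlv a ha
          omega
        · rintro ⟨h1, h2⟩
          have hal : a ∈ u ++ v ++ [y] := (hmem a).mpr ⟨h1, by omega⟩
          rcases (by simpa using hal : a ∈ u ∨ (a ∈ v ∨ a = y)) with h | h | rfl
          · have := hgu a h; omega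
          · exact h
          · omega
      -- u.Perm ((bl (m - y)).map (· + y))
      have huperm : u.Perm ((bl (m - y)).map (· + y)) := by
        apply List.perm_of_nodup_nodup_toFinset_eq hund
          ((nodup_bl _).map (fun a b hab => by omega))
        ext a
        simp only [List.mem_toFinset, List.mem_map]
        constructor
        · intro ha
          have h1 : a ∈ u ++ v ++ [y] := by simp [ha]
          have h2 := (hmem a).mp h1
          have h3 := hgu a ha
          exact ⟨a - y, mem_bl.mpr (by omega), by omega⟩
        · rintro ⟨b, hb, rfl⟩
          have hb' := mem_bl.mp hb
          have hal : b + y ∈ u ++ v ++ [y] := (hmem _).mpr ⟨by omega, by omega⟩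
          rcases (by simpa using hal : b + y ∈ u ∨ (b + y ∈ v ∨ b + y = y)) with h | h | h
          · exact h
          · have := hlv _ h; omega
          · omega
      have humap : (u.map (· - y)).Perm (bl (m - y)) := by
        have := huperm.map (· - y)
        rw [List.map_map] at this
        have he : (bl (m - y)).map ((· - y) ∘ (· + y)) = bl (m - y) := by
          have : ∀ a ∈ bl (m - y), ((· - y) ∘ (· + y)) a = id a := fun a _ => by simp
          rw [List.map_congr_left this, List.map_id]
        rwa [he] at this
      refine ⟨⟨⟨y - 1, by omega⟩, ⟨v, hvperm, hv⟩,
        ⟨u.map (· - y), ?_, sepNF_map_sub y hu hgu⟩⟩, ?_⟩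
      · rw [show m - 1 - (y - 1) = m - y from by omega]
        exact humap
      · apply Subtype.ext
        show (u.map (· - y)).map (· + (y - 1 + 1)) ++ v ++ [y - 1 + 1] = u ++ v ++ [y]
        rw [show y - 1 + 1 = y from by omega]
        congr 1
        congr 1
        rw [List.map_map]
        have : ∀ a ∈ u, ((· + y) ∘ (· - y)) a = id a := fun a ha => by
          have := hgu a ha; simp; omega
        rw [List.map_congr_left this, List.map_id]
  letI : ∀ k, Fintype (NFw k) := fun k => Fintype.ofFinite _
  calc Nat.card (NFw m) = Nat.card (Σ i : Fin m, NFw i × NFw (m - 1 - i)) :=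
        (Nat.card_eq_of_bijective (Fmap m) ⟨hinj, hsurj⟩).symm
    _ = Fintype.card (Σ i : Fin m, NFw i × NFw (m - 1 - i)) := Nat.card_eq_fintype_card
    _ = ∑ i : Fin m, Fintype.card (NFw i × NFw (m - 1 - i)) := Fintype.card_sigma
    _ = ∑ i : Fin m, Nat.card (NFw i) * Nat.card (NFw (m - 1 - i)) := by
        simp [Fintype.card_prod, Nat.card_eq_fintype_card]
    _ = ∑ i ∈ Finset.range m, Nat.card (NFw i) * Nat.card (NFw (m - 1 - i)) :=
        Fin.sum_univ_eq_sum_range (fun i => Nat.card (NFw i) * Nat.card (NFw (m - 1 - i))) m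

lemma sepCount_zero : sepCount 0 = 1 := by
  rw [sepCount_eq, Nat.card_eq_one_iff_unique]
  constructor
  · constructor
    rintro ⟨a, ha, _⟩ ⟨b, hb, _⟩
    apply Subtype.ext
    have ha' : a = [] := by simpa [bl] using ha.eq_nil
    have hb' : b = [] := by simpa [bl] using hb.eq_nil
    simp [ha', hb']
  · exact ⟨⟨[], by simp [bl], SepNF.nil⟩⟩

lemma sepCount_one : sepCount 1 = 1 := by
  rw [sepCount_eq, Nat.card_eq_one_iff_unique]
  have hbl : bl 1 = [1] := by simp [bl, List.range_succ]
  constructor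
  · constructor
    rintro ⟨a, ha, _⟩ ⟨b, hb, _⟩
    apply Subtype.ext
    rw [hbl] at ha hb
    simp [ha.eq_singleton, hb.eq_singleton]
  · have hs : SepNF [1] := by
      simpa using SepNF.node [] [] 1 SepNF.nil SepNF.nil (by simp) (by simp)
    exact ⟨⟨[1], by rw [hbl], hs⟩⟩

end SylvP

/-- Every sylvester class contains a word with the separation property; the
recursive normal form is unique in each class; and the number of normal forms
satisfies the Catalan recurrence `f_n = Σ_{i=1}^{n} f_{i-1} f_{n-i}`,
`f_0 = f_1 = 1`. -/
theorem stmt14 (n : ℕ) :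
    (∀ l : List ℕ, l.Perm ((List.range n).map (· + 1)) →
      ∃ w : List ℕ, SylvCong l w ∧ SepNF w) ∧
    (∀ w1 w2 : List ℕ, w1.Perm ((List.range n).map (· + 1)) →
      w2.Perm ((List.range n).map (· + 1)) →
      SepNF w1 → SepNF w2 → SylvCong w1 w2 → w1 = w2) ∧
    sepCount 0 = 1 ∧ sepCount 1 = 1 ∧
    (∀ m : ℕ, 1 ≤ m →
      sepCount m = ∑ i ∈ Finset.range m, sepCount i * sepCount (m - 1 - i)) := by
  refine ⟨?_, ?_, SylvP.sepCount_zero, SylvP.sepCount_one, ?_⟩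
  · intro l hl
    exact SylvP.exists_sepNF l (hl.nodup_iff.mpr (SylvP.nodup_bl n))
  · intro w1 w2 h1 h2 hs1 hs2 hc
    exact SylvP.sepNF_unique hs1 hs2 (h1.nodup_iff.mpr (SylvP.nodup_bl n)) hc
  · intro m hm
    rw [SylvP.sepCount_eq m, SylvP.card_rec hm]
    simp only [SylvP.sepCount_eq]
end

section
/- If a sequence of signed flips transforms a signed triangulation T_ε into signed triangulations U_{ε'} and U_{ε''} having the same underlying triangulation U, then ε' = ε''. Equivalently: if the doubled signed sphere triangulation U_{ε'} ∪_P U_{-ε''} (two copies of U glued along the polygon boundary, with signings ε' and -ε'') satisfies the Heawood property that the sum of the signs of the faces around each vertex is ≡ 0 mod 3, then ε' = ε''. -/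
open scoped Classical

private lemma cross_aux (n : ℕ) (D : Finset (ℕ × ℕ)) (hD : IsTriangulation n D)
    {p q r s : ℕ} (h1 : IsEdge n D p q) (h2 : IsEdge n D r s)
    (hpr : p < r) (hrq : r < q) (hqs : q < s) : False := by
  obtain ⟨hpq, hqn, hq⟩ := h1
  obtain ⟨hrs, hsn, hs⟩ := h2
  have hqD : (p, q) ∈ D := by
    rcases hq with h | h | h
    · omega
    · omega
    · exact h
  have hsD : (r, s) ∈ D := by
    rcases hs with h | h | h
    · omega
    · omega
    · exact h
  exact hD.2.1 _ hqD _ hsD (Or.inl ⟨hpr, hrq, hqs⟩)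

/-- If the doubled signed sphere triangulation `U_{ε'} ∪_P U_{-ε''}` (two copies of
`U` glued along the polygon boundary, signed by `ε'` and `-ε''`) satisfies the
Heawood property — at each vertex the sum of the signs of the incident faces is
divisible by 3 — then `ε' = ε''`. -/
theorem stmt18 (n : ℕ) (D : Finset (ℕ × ℕ)) (hD : IsTriangulation n D)
    (ε' ε'' : ℕ × ℕ × ℕ → ℤ)
    (hs1 : ∀ F ∈ facesSet n D, ε' F = 1 ∨ ε' F = -1)
    (hs2 : ∀ F ∈ facesSet n D, ε'' F = 1 ∨ ε'' F = -1)
    (heawood : ∀ v ≤ n + 1,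
      (3 : ℤ) ∣ ∑ F ∈ (facesSet n D).filter
        (fun t => t.1 = v ∨ t.2.1 = v ∨ t.2.2 = v), (ε' F + (- ε'' F))) :
    ∀ F ∈ facesSet n D, ε' F = ε'' F := by
  by_contra h
  push_neg at h
  obtain ⟨F0, hF0mem, hF0ne⟩ := h
  obtain ⟨F, hFS, hmin⟩ := Finset.exists_min_image
    ((facesSet n D).filter (fun F => ε' F ≠ ε'' F)) (fun F => F.2.2 - F.1)
    ⟨F0, Finset.mem_filter.mpr ⟨hF0mem, hF0ne⟩⟩
  rw [Finset.mem_filter] at hFS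
  obtain ⟨hFmem, hFne⟩ := hFS
  obtain ⟨a, b, c⟩ := F
  have hF : IsFace n D a b c := (Finset.mem_filter.mp hFmem).2
  obtain ⟨hab, hbc, hEab, hEbc, hEac⟩ := hF
  have hble : b ≤ n + 1 := by
    have := hEbc.2.1
    omega
  have hdvd := heawood b hble
  have hsum : ∑ G ∈ (facesSet n D).filter
      (fun t => t.1 = b ∨ t.2.1 = b ∨ t.2.2 = b),
      (ε' G + -ε'' G) = ε' (a, b, c) + -ε'' (a, b, c) := by
    apply Finset.sum_eq_single
    · intro G hG hGne
      rw [Finset.mem_filter] at hG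
      obtain ⟨hGmem, hGb⟩ := hG
      obtain ⟨x, y, z⟩ := G
      have hGface : IsFace n D x y z := (Finset.mem_filter.mp hGmem).2
      obtain ⟨hxy, hyz, hExy, hEyz, hExz⟩ := hGface
      have heq : ε' (x, y, z) = ε'' (x, y, z) := by
        by_contra hne
        have hFle : c - a ≤ z - x :=
          hmin (x, y, z) (Finset.mem_filter.mpr ⟨hGmem, hne⟩)
        have hneq : ¬(x = a ∧ y = b ∧ z = c) := by
          simpa [Prod.ext_iff] using hGne
        change x = b ∨ y = b ∨ z = b at hGb
        rcases hGb with hb | hb | hb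
        · -- x = b
          have hzc : z ≤ c := by
            by_contra hzc
            exact cross_aux n D hD hEac (hb ▸ hExz) hab hbc (by omega)
          omega
        · -- y = b
          have hxa : a ≤ x := by
            by_contra hxa
            exact cross_aux n D hD (hb ▸ hExy) hEac (by omega) hab hbc
          have hzc : z ≤ c := by
            by_contra hzc
            exact cross_aux n D hD hEac (hb ▸ hEyz) hab hbc (by omega)
          omega
        · -- z = b
          have hxa : a ≤ x := by
            by_contra hxa
            exact cross_aux n D hD (hb ▸ hExz) hEac (by omega) hab hbc
          omega
      rw [heq]
      ring
    · intro habs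
      exact absurd (Finset.mem_filter.mpr ⟨hFmem, Or.inr (Or.inl rfl)⟩) habs
  rw [hsum] at hdvd
  rcases hs1 (a, b, c) hFmem with h1 | h1 <;>
    rcases hs2 (a, b, c) hFmem with h2 | h2 <;>
      rw [h1, h2] at hdvd hFne <;> omega
end
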